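/- arXiv:1904.00219 — 5 statements merged into one kernel-verified Lean document; each statement's English description precedes it below -/
import Mathlib

section
/- Let r ∈ ℚ_{>0} be such that S_r is atomic (i.e., r = 1 or n(r) > 1). Then ρ(S_r) < ∞ if and only if the k-th local elasticity ρ_k(S_r) = sup U_k(S_r) is finite for every k ∈ ℕ. -/
open Finsupp
open scoped ENNReal

/-- The Puiseux monoid (rational cyclic semiring) `S_r`, the additive submonoid of `ℚ`
generated by the nonnegative powers of `r`. -/
def S (r : ℚ) : AddSubmonoid ℚ := AddSubmonoid.closure {x : ℚ | ∃ n : ℕ, x = r ^ n}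

/-- A factorization of `x` over the powers of `r`: a finitely supported choice of
coefficients `α i` with `∑ α i * r ^ i = x`. -/
def IsFactorization (r x : ℚ) (α : ℕ →₀ ℕ) : Prop :=
  (α.sum fun i c => (c : ℚ) * r ^ i) = x

/-- The length of a factorization. -/
def flen (α : ℕ →₀ ℕ) : ℕ := α.sum fun _ c => c

/-- The set of lengths of factorizations of `x` over the powers of `r`. -/
def lengthSet (r x : ℚ) : Set ℕ :=
  {t | ∃ α : ℕ →₀ ℕ, IsFactorization r x α ∧ flen α = t}

/-- An atom of `S_r`: a nonzero element that is not the sum of two nonzero elements. -/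
def IsAtomS (r a : ℚ) : Prop :=
  a ∈ S r ∧ a ≠ 0 ∧ ¬ ∃ y z : ℚ, y ∈ S r ∧ z ∈ S r ∧ y ≠ 0 ∧ z ≠ 0 ∧ a = y + z

/-- The set of lengths of `x` as sums of atoms of `S_r`. -/
def atomLengthSet (r x : ℚ) : Set ℕ :=
  {t | ∃ f : Fin t → ℚ, (∀ i, IsAtomS r (f i)) ∧ ∑ i, f i = x}

open Classical in
/-- The elasticity of `x` in `S_r` (as an extended nonnegative real). -/
noncomputable def elast (r x : ℚ) : ℝ≥0∞ :=
  if x = 0 then 1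
  else if BddAbove (atomLengthSet r x) then
    (↑(sSup (atomLengthSet r x)) : ℝ≥0∞) / (↑(sInf (atomLengthSet r x)) : ℝ≥0∞)
  else ⊤

/-- The elasticity of the monoid `S_r`. -/
noncomputable def elastM (r : ℚ) : ℝ≥0∞ := ⨆ x ∈ S r, elast r x

/-- The union of the sets of lengths (over atoms) of elements of `S_r` containing `k`. -/
def Uk (r : ℚ) (k : ℕ) : Set ℕ :=
  {l | ∃ x ∈ S r, x ≠ 0 ∧ k ∈ atomLengthSet r x ∧ l ∈ atomLengthSet r x}




lemma natB (N d : ℕ) (hN : 2 ≤ N) (hd : 2 ≤ d) (hcop : Nat.Coprime N d) :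
    ∀ (M : ℕ) (c : ℕ → ℕ) (i : ℕ), i ≤ M →
      (∑ j ∈ Finset.range (M+1), c j * N ^ j * d ^ (M - j)) = N ^ i * d ^ (M - i) →
      ∀ j, j ≤ M → c j = if j = i then 1 else 0 := by
  intro M
  induction M with
  | zero =>
    intro c i hi heq j hj
    interval_cases i
    interval_cases j
    simpa using heq
  | succ M ih =>
    intro c i hi heq j hj
    rw [Finset.sum_range_succ] at heq
    have hdvdsum : d ∣ ∑ j ∈ Finset.range (M+1), c j * N ^ j * d ^ (M + 1 - j) := by
      refine Finset.dvd_sum fun j hjm => ?_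
      have hj' : j ≤ M := Nat.lt_succ_iff.mp (Finset.mem_range.mp hjm)
      exact Dvd.dvd.mul_left (dvd_pow_self d (by omega)) _
    rcases Nat.lt_succ_iff_lt_or_eq.mp (Nat.lt_succ_of_le hi) with hiM | hiM
    · -- i ≤ M
      have hiM : i ≤ M := Nat.lt_succ_iff.mp hiM
      have hdvdR : d ∣ N ^ i * d ^ (M + 1 - i) :=
        Dvd.dvd.mul_left (dvd_pow_self d (by omega)) _
      have hdvdtop : d ∣ c (M+1) * N ^ (M+1) * d ^ (M + 1 - (M+1)) := by
        have := (Nat.dvd_add_right hdvdsum).mp (heq ▸ hdvdR)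
        simpa using this
      have hdvdc : d ∣ c (M+1) := by
        have h1 : d ∣ c (M+1) * N ^ (M+1) := by simpa using hdvdtop
        exact (Nat.Coprime.dvd_of_dvd_mul_right (Nat.Coprime.pow_right _ hcop.symm) h1)
      obtain ⟨e, he⟩ := hdvdc
      set c' : ℕ → ℕ := fun j => if j = M then c M + e * N else c j with hc'def
      have heq' : (∑ j ∈ Finset.range (M+1), c' j * N ^ j * d ^ (M - j)) = N ^ i * d ^ (M - i) := by
        apply Nat.eq_of_mul_eq_mul_left (show 0 < d by omega)
        have lhs : d * ∑ j ∈ Finset.range (M+1), c' j * N ^ j * d ^ (M - j)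
            = ∑ j ∈ Finset.range (M+1), c' j * N ^ j * d ^ (M + 1 - j) := by
          rw [Finset.mul_sum]
          refine Finset.sum_congr rfl fun j hjm => ?_
          have hj' : j ≤ M := Nat.lt_succ_iff.mp (Finset.mem_range.mp hjm)
          have : M + 1 - j = (M - j) + 1 := by omega
          rw [this, pow_succ]
          ring
        rw [lhs]
        have rhs : d * (N ^ i * d ^ (M - i)) = N ^ i * d ^ (M + 1 - i) := by
          have : M + 1 - i = (M - i) + 1 := by omega
          rw [this, pow_succ]; ring
        rw [rhs, ← heq]
        rw [Finset.sum_range_succ, Finset.sum_range_succ]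
        have h1 : ∀ j ∈ Finset.range M, c' j * N ^ j * d ^ (M + 1 - j) = c j * N ^ j * d ^ (M + 1 - j) := by
          intro j hjm
          have : j ≠ M := by have := Finset.mem_range.mp hjm; omega
          simp [hc'def, this]
        rw [Finset.sum_congr rfl h1]
        have h2 : c' M = c M + e * N := by simp [hc'def]
        rw [h2, he]
        have : M + 1 - M = 1 := by omega
        rw [this]
        simp only [Nat.sub_self, pow_zero, mul_one, pow_succ]
        ring
      have hres := ih c' i hiM heq'
      have he0 : e = 0 := by
        have hM := hres M (le_refl M)
        by_cases hMi : M = i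
        · rw [if_pos hMi] at hM
          have : c' M = c M + e * N := by simp [hc'def]
          rw [this] at hM
          rcases Nat.eq_zero_or_pos e with h | h
          · exact h
          · have : N ≤ e * N := Nat.le_mul_of_pos_left N h
            omega
        · rw [if_neg hMi] at hM
          have : c' M = c M + e * N := by simp [hc'def]
          rw [this] at hM
          have : e * N = 0 := by omega
          rcases Nat.mul_eq_zero.mp this with h | h
          · exact h
          · omega
      rcases Nat.lt_succ_iff_lt_or_eq.mp (Nat.lt_succ_of_le hj) with hjM | hjM
      · have hjM : j ≤ M := Nat.lt_succ_iff.mp hjM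
        have := hres j hjM
        by_cases hjMeq : j = M
        · subst hjMeq
          have hcM : c' j = c j + e * N := by simp [hc'def]
          rw [hcM, he0] at this
          simpa using this
        · rw [show c' j = c j by simp [hc'def, hjMeq]] at this
          exact this
      · subst hjM
        rw [he, he0]
        have : ¬ (M + 1 = i) := by omega
        simp [this]
    · -- i = M + 1
      subst hiM
      simp only [Nat.sub_self, pow_zero, mul_one] at heq
      rcases Nat.eq_zero_or_pos (c (M+1)) with hc | hc
      · exfalso
        rw [hc, zero_mul, add_zero] at heq
        have : d ∣ N ^ (M+1) := heq ▸ hdvdsum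
        have := Nat.Coprime.eq_one_of_dvd (Nat.Coprime.pow_right _ hcop.symm) this
        omega
      · -- c (M+1) ≥ 1
        obtain ⟨k, hk⟩ : ∃ k, c (M+1) = k + 1 := ⟨c (M+1) - 1, by omega⟩
        rw [hk] at heq
        have hsum0 : (∑ j ∈ Finset.range (M+1), c j * N ^ j * d ^ (M + 1 - j)) + k * N ^ (M+1) = 0 := by
          have hNpow : 0 < N ^ (M+1) := pow_pos (by omega) _
          nlinarith [heq]
        have hk0 : k = 0 := by
          have : k * N ^ (M+1) = 0 := by omega
          rcases Nat.mul_eq_zero.mp this with h | h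
          · exact h
          · have : 0 < N ^ (M+1) := pow_pos (by omega) _
            omega
        have hall : ∀ j ∈ Finset.range (M+1), c j * N ^ j * d ^ (M + 1 - j) = 0 := by
          intro j hjm
          have hsum0' : (∑ j ∈ Finset.range (M+1), c j * N ^ j * d ^ (M + 1 - j)) = 0 := by omega
          exact (Finset.sum_eq_zero_iff).mp hsum0' j hjm
        rcases Nat.lt_succ_iff_lt_or_eq.mp (Nat.lt_succ_of_le hj) with hjM | hjM
        · have hjM' : j < M + 1 := hjM
          have := hall j (Finset.mem_range.mpr hjM')
          have hcj : c j = 0 := by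
            have hN' : 0 < N ^ j := pow_pos (by omega) _
            have hd' : 0 < d ^ (M + 1 - j) := pow_pos (by omega) _
            rcases Nat.mul_eq_zero.mp this with h | h
            · rcases Nat.mul_eq_zero.mp h with h' | h'
              · exact h'
              · omega
            · omega
          rw [hcj]
          have : ¬ (j = M + 1) := by omega
          simp [this]
        · subst hjM
          rw [hk, hk0]
          simp


lemma exists_factorization {r x : ℚ} (hx : x ∈ S r) : ∃ α, IsFactorization r x α := by
  induction hx using AddSubmonoid.closure_induction with
  | mem y hy =>
    obtain ⟨n, rfl⟩ := hy
    exact ⟨Finsupp.single n 1, by simp [IsFactorization, Finsupp.sum_single_index]⟩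
  | zero => exact ⟨0, by simp [IsFactorization]⟩
  | add y z hy hz hy' hz' =>
    obtain ⟨β, hβ⟩ := hy'
    obtain ⟨γ, hγ⟩ := hz'
    refine ⟨β + γ, ?_⟩
    unfold IsFactorization at *
    rw [Finsupp.sum_add_index' (by simp) (by intro a b c; push_cast; ring), hβ, hγ]

lemma flen_add (β γ : ℕ →₀ ℕ) : flen (β + γ) = flen β + flen γ := by
  unfold flen
  rw [Finsupp.sum_add_index' (by simp) (by simp)]

lemma flen_eq_zero {β : ℕ →₀ ℕ} (h : flen β = 0) : β = 0 := by
  unfold flen at h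
  ext a
  by_cases ha : a ∈ β.support
  · have := Finset.sum_eq_zero_iff.mp h a ha
    simpa using this
  · simpa using Finsupp.notMem_support_iff.mp ha

lemma flen_pos {r y : ℚ} {β : ℕ →₀ ℕ} (hβ : IsFactorization r y β) (hy : y ≠ 0) : 1 ≤ flen β := by
  rcases Nat.eq_zero_or_pos (flen β) with h | h
  · exfalso
    apply hy
    rw [← hβ, flen_eq_zero h]
    simp [Finsupp.sum]
  · exact h

lemma factor_len_one (r : ℚ) (h0 : 0 < r) (hd : 2 ≤ r.den) (hn : 1 < r.num)
    (i : ℕ) (α : ℕ →₀ ℕ) (hα : IsFactorization r (r ^ i) α) : flen α = 1 := by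
  set N := r.num.toNat with hNdef
  set d := r.den with hddef
  have hnum0 : (0:ℤ) < r.num := Rat.num_pos.mpr h0
  have hN2 : 2 ≤ N := by omega
  have hd2 : 2 ≤ d := hd
  have hcop : Nat.Coprime N d := by
    have := r.reduced
    have hNa : r.num.natAbs = N := by omega
    rwa [hNa] at this
  have hdq : ((d:ℚ)) ≠ 0 := by positivity
  have hrNd : r = (N : ℚ) / (d : ℚ) := by
    rw [← Rat.num_div_den r]
    congr 1
    · exact_mod_cast (Int.toNat_of_nonneg hnum0.le).symm
  set M := max i (α.support.sup id) with hMdef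
  have hiM : i ≤ M := le_max_left _ _
  have hsub : α.support ⊆ Finset.range (M+1) := by
    intro j hj
    have : j ≤ α.support.sup id := Finset.le_sup (f := id) hj
    exact Finset.mem_range.mpr (by omega)
  have hsum : ∑ j ∈ Finset.range (M+1), (α j : ℚ) * r ^ j = r ^ i := by
    rw [← hα]
    exact (Finsupp.sum_of_support_subset α hsub (fun j c => (c:ℚ) * r ^ j) (by simp)).symm
  have key : ∀ j, j ≤ M → r ^ j * (d:ℚ) ^ M = ((N ^ j * d ^ (M - j) : ℕ) : ℚ) := by
    intro j hj
    have hsplit : (d:ℚ) ^ M = (d:ℚ) ^ j * (d:ℚ) ^ (M - j) := by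
      rw [← pow_add]
      congr 1
      omega
    rw [hrNd, div_pow, hsplit]
    push_cast
    field_simp
  have hnat : (∑ j ∈ Finset.range (M+1), α j * N ^ j * d ^ (M - j)) = N ^ i * d ^ (M - i) := by
    have h2 : (∑ j ∈ Finset.range (M+1), (α j : ℚ) * r ^ j) * (d:ℚ) ^ M = r ^ i * (d:ℚ) ^ M := by
      rw [hsum]
    rw [Finset.sum_mul] at h2
    have h3 : ∀ j ∈ Finset.range (M+1), (α j : ℚ) * r ^ j * (d:ℚ) ^ M
        = ((α j * N ^ j * d ^ (M - j) : ℕ) : ℚ) := by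
      intro j hjm
      have hj : j ≤ M := Nat.lt_succ_iff.mp (Finset.mem_range.mp hjm)
      rw [mul_assoc, key j hj]
      push_cast
      ring
    rw [Finset.sum_congr rfl h3, key i hiM] at h2
    exact_mod_cast (by rw [← Nat.cast_sum] at h2; exact_mod_cast h2 : _)
  have hres := natB N d hN2 hd2 hcop M α i hiM hnat
  have hflen : flen α = ∑ j ∈ Finset.range (M+1), α j := by
    unfold flen
    exact Finsupp.sum_of_support_subset α hsub _ (by simp)
  rw [hflen, Finset.sum_congr rfl (fun j hjm => hres j (Nat.lt_succ_iff.mp (Finset.mem_range.mp hjm)))]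
  rw [Finset.sum_ite_eq' (Finset.range (M+1)) i (fun _ => 1)]
  simp [Finset.mem_range, Nat.lt_succ_iff, hiM]

lemma pow_mem_S (r : ℚ) (m : ℕ) : r ^ m ∈ S r :=
  AddSubmonoid.subset_closure ⟨m, rfl⟩

lemma pow_isAtom (r : ℚ) (h0 : 0 < r) (hd : 2 ≤ r.den) (hn : 1 < r.num) (m : ℕ) :
    IsAtomS r (r ^ m) := by
  refine ⟨pow_mem_S r m, by positivity, ?_⟩
  rintro ⟨y, z, hy, hz, hy0, hz0, hsum⟩
  obtain ⟨β, hβ⟩ := exists_factorization hy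
  obtain ⟨γ, hγ⟩ := exists_factorization hz
  have hfact : IsFactorization r (r ^ m) (β + γ) := by
    unfold IsFactorization at *
    rw [Finsupp.sum_add_index' (by simp) (by intro a b c; push_cast; ring), hβ, hγ, hsum]
  have h1 := factor_len_one r h0 hd hn m (β + γ) hfact
  rw [flen_add] at h1
  have := flen_pos hβ hy0
  have := flen_pos hγ hz0
  omega

lemma atomLengthSet_add {r x y : ℚ} {a b : ℕ} (ha : a ∈ atomLengthSet r x)
    (hb : b ∈ atomLengthSet r y) : a + b ∈ atomLengthSet r (x + y) := by
  obtain ⟨f, hf, hfs⟩ := ha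
  obtain ⟨g, hg, hgs⟩ := hb
  refine ⟨fun i => Sum.elim f g (finSumFinEquiv.symm i), fun i => ?_, ?_⟩
  · rcases h : finSumFinEquiv.symm i with p | p <;> simp [h, hf, hg]
  · have := Equiv.sum_comp (finSumFinEquiv : Fin a ⊕ Fin b ≃ Fin (a + b))
      (fun i => Sum.elim f g (finSumFinEquiv.symm i))
    simp only [Equiv.symm_apply_apply] at this
    rw [← this, Fintype.sum_sum_type]
    simp [hfs, hgs]

lemma atom_one_mem {r a : ℚ} (ha : IsAtomS r a) : 1 ∈ atomLengthSet r a :=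
  ⟨fun _ => a, fun _ => ha, by simp⟩

lemma atom_smul_mem {r a : ℚ} (ha : IsAtomS r a) (t : ℕ) :
    t ∈ atomLengthSet r ((t : ℚ) * a) := by
  induction t with
  | zero => exact ⟨fun i => i.elim0, fun i => i.elim0, by simp⟩
  | succ t ih =>
    have h := atomLengthSet_add ih (atom_one_mem ha)
    have : ((t:ℚ) * a + a) = ((t+1 : ℕ) : ℚ) * a := by push_cast; ring
    rwa [this] at h

lemma length_pos {r x : ℚ} {a : ℕ} (hx : x ≠ 0) (ha : a ∈ atomLengthSet r x) : 1 ≤ a := by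
  rcases Nat.eq_zero_or_pos a with h | h
  · exfalso
    subst h
    obtain ⟨f, _, hfs⟩ := ha
    exact hx (by simpa using hfs.symm)
  · exact h

lemma dr_eq_N (r : ℚ) (h0 : 0 < r) : (r.den : ℚ) * r = (r.num.toNat : ℚ) := by
  have hnum0 : (0:ℤ) < r.num := Rat.num_pos.mpr h0
  have h1 : ((r.num.toNat : ℤ) : ℚ) = (r.num : ℚ) := by
    exact_mod_cast congrArg (Int.cast : ℤ → ℚ) (Int.toNat_of_nonneg hnum0.le)
  have hdq : ((r.den:ℚ)) ≠ 0 := by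
    have := r.den_nz
    positivity
  have h2 : (r.den:ℚ) * ((r.num:ℚ)/(r.den:ℚ)) = (r.num:ℚ) := by field_simp
  rw [Rat.num_div_den] at h2
  rw [show ((r.num.toNat : ℚ)) = ((r.num : ℚ)) by exact_mod_cast h1]
  exact h2

lemma key_family (r : ℚ) (h0 : 0 < r) (hd : 2 ≤ r.den) (hn : 1 < r.num) :
    ∃ e : ℕ, 1 ≤ e ∧ ∀ s : ℕ, ∃ x : ℚ, x ∈ S r ∧ x ≠ 0 ∧
      r.den ∈ atomLengthSet r x ∧ r.den + s * e ∈ atomLengthSet r x := by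
  set N := r.num.toNat with hNdef
  set d := r.den with hddef
  have hnum0 : (0:ℤ) < r.num := Rat.num_pos.mpr h0
  have hN2 : 2 ≤ N := by omega
  have hcop : Nat.Coprime N d := by
    have := r.reduced
    have hNa : r.num.natAbs = N := by omega
    rwa [hNa] at this
  have hNd : N ≠ d := by
    intro h
    rw [h] at hcop
    have := Nat.Coprime.eq_one_of_dvd hcop dvd_rfl
    omega
  have hdr : (d : ℚ) * r = (N : ℚ) := dr_eq_N r h0
  have hbase : ∀ m : ℕ, d ∈ atomLengthSet r ((d:ℚ) * r ^ m) :=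
    fun m => atom_smul_mem (pow_isAtom r h0 hd hn m) d
  have hmemS : ∀ m : ℕ, (d:ℚ) * r ^ m ∈ S r := by
    intro m
    have := AddSubmonoid.nsmul_mem (S r) (pow_mem_S r m) d
    rwa [nsmul_eq_mul] at this
  have hne : ∀ m : ℕ, (d:ℚ) * r ^ m ≠ 0 := by
    intro m
    have : (0:ℚ) < (d:ℚ) * r ^ m := by positivity
    exact this.ne'
  rcases lt_or_gt_of_ne hNd with hlt | hgt
  · -- N < d : r < 1
    refine ⟨d - N, by omega, ?_⟩
    have main : ∀ s m : ℕ, d + s * (d - N) ∈ atomLengthSet r ((d:ℚ) * r ^ m) := by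
      intro s
      induction s with
      | zero => intro m; simpa using hbase m
      | succ s ih =>
        intro m
        have hsplit : (d:ℚ) * r ^ m = ((d - N : ℕ) : ℚ) * r ^ m + (d:ℚ) * r ^ (m+1) := by
          have : ((d - N : ℕ) : ℚ) = (d:ℚ) - (N:ℚ) := by
            push_cast [Nat.cast_sub hlt.le]; ring
          rw [this]
          linear_combination (-(r ^ m)) * hdr
        rw [hsplit]
        have h1 := atom_smul_mem (pow_isAtom r h0 hd hn m) (d - N)
        have h2 := ih (m+1)
        have := atomLengthSet_add h1 h2
        have harith : (d - N) + (d + s * (d - N)) = d + (s+1) * (d - N) := by ring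
        rwa [harith] at this
    intro s
    exact ⟨(d:ℚ) * r ^ 0, hmemS 0, hne 0, hbase 0, main s 0⟩
  · -- d < N : r > 1
    refine ⟨N - d, by omega, ?_⟩
    have main : ∀ s : ℕ, d + s * (N - d) ∈ atomLengthSet r ((d:ℚ) * r ^ s) := by
      intro s
      induction s with
      | zero => simpa using hbase 0
      | succ s ih =>
        have hsplit : (d:ℚ) * r ^ (s+1) = ((N - d : ℕ) : ℚ) * r ^ s + (d:ℚ) * r ^ s := by
          have : ((N - d : ℕ) : ℚ) = (N:ℚ) - (d:ℚ) := by
            push_cast [Nat.cast_sub hgt.le]; ring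
          rw [this]
          linear_combination (r ^ s) * hdr
        rw [hsplit]
        have h1 := atom_smul_mem (pow_isAtom r h0 hd hn s) (N - d)
        have := atomLengthSet_add h1 ih
        have harith : (N - d) + (d + s * (N - d)) = d + (s+1) * (N - d) := by ring
        rwa [harith] at this
    intro s
    exact ⟨(d:ℚ) * r ^ s, hmemS s, hne s, hbase s, main s⟩

lemma div_le_elast {r x : ℚ} {a b : ℕ} (hx : x ≠ 0) (ha : a ∈ atomLengthSet r x)
    (hb : b ∈ atomLengthSet r x) : (b : ℝ≥0∞) / (a : ℝ≥0∞) ≤ elast r x := by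
  rw [elast, if_neg hx]
  split_ifs with hB
  · exact ENNReal.div_le_div (by exact_mod_cast Nat.cast_le.mpr (le_csSup hB hb))
      (by exact_mod_cast Nat.cast_le.mpr (Nat.sInf_le ha))
  · exact le_top

lemma elast_le_elastM {r x : ℚ} (hx : x ∈ S r) : elast r x ≤ elastM r :=
  le_iSup₂ (f := fun (x : ℚ) (_ : x ∈ S r) => elast r x) x hx

lemma den_ge_two_case (r : ℚ) (h0 : 0 < r) (hd : 2 ≤ r.den) (hn : 1 < r.num) :
    ¬ (elastM r < ⊤) ∧ ¬ (∀ k : ℕ, 0 < k → (⨆ l ∈ Uk r k, (l : ℕ∞)) < ⊤) := by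
  obtain ⟨e, he1, hfam⟩ := key_family r h0 hd hn
  have hd0 : 0 < r.den := by omega
  constructor
  · intro hlt
    have hdne : ((r.den : ℝ≥0∞)) ≠ 0 := Nat.cast_ne_zero.mpr hd0.ne'
    have hdnetop : ((r.den : ℝ≥0∞)) ≠ ⊤ := ENNReal.natCast_ne_top _
    have hb : ∀ s : ℕ, ((r.den + s * e : ℕ) : ℝ≥0∞) ≤ elastM r * (r.den : ℝ≥0∞) := by
      intro s
      obtain ⟨x, hxS, hx0, hk, hl⟩ := hfam s
      have h1 : ((r.den + s * e : ℕ) : ℝ≥0∞) / (r.den : ℝ≥0∞) ≤ elastM r :=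
        le_trans (div_le_elast hx0 hk hl) (elast_le_elastM hxS)
      exact (ENNReal.div_le_iff_le_mul (Or.inl hdne) (Or.inl hdnetop)).mp h1
    have hMd : elastM r * (r.den : ℝ≥0∞) ≠ ⊤ := ENNReal.mul_ne_top hlt.ne hdnetop
    obtain ⟨K, hK⟩ := ENNReal.exists_nat_gt hMd
    have h2 := hb K
    have h3 : ((K : ℕ) : ℝ≥0∞) ≤ ((r.den + K * e : ℕ) : ℝ≥0∞) := by
      have : (K : ℕ) ≤ r.den + K * e := by
        have : K ≤ K * e := Nat.le_mul_of_pos_right K he1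
        omega
      exact_mod_cast Nat.cast_le.mpr this
    exact absurd (le_trans h3 h2) (not_le.mpr hK)
  · intro hall
    have hlt := hall r.den hd0
    set A := (⨆ l ∈ Uk r r.den, (l : ℕ∞)) with hA
    have hne : A ≠ ⊤ := hlt.ne
    lift A to ℕ using hne with c hc
    have hmem : ∀ s : ℕ, (r.den + s * e) ∈ Uk r r.den := by
      intro s
      obtain ⟨x, hxS, hx0, hk, hl⟩ := hfam s
      exact ⟨x, hxS, hx0, hk, hl⟩
    have hb : ∀ s : ℕ, r.den + s * e ≤ c := by
      intro s
      have h1 : ((r.den + s * e : ℕ) : ℕ∞) ≤ (c : ℕ∞) := by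
        rw [hc]
        exact le_iSup₂ (f := fun (l : ℕ) (_ : l ∈ Uk r r.den) => (l : ℕ∞)) _ (hmem s)
      exact_mod_cast h1
    have := hb c
    have : c ≤ c * e := Nat.le_mul_of_pos_right c he1
    omega

lemma mem_S_den_one {r : ℚ} (h0 : 0 < r) (hd : r.den = 1) {x : ℚ} (hx : x ∈ S r) :
    ∃ m : ℕ, (m : ℚ) = x := by
  have hr : r = ((r.num.toNat : ℕ) : ℚ) := by
    have hnum0 : (0:ℤ) < r.num := Rat.num_pos.mpr h0
    have h1 : ((r.num.toNat : ℤ) : ℚ) = (r.num : ℚ) := by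
      exact_mod_cast congrArg (Int.cast : ℤ → ℚ) (Int.toNat_of_nonneg hnum0.le)
    rw [show ((r.num.toNat : ℚ)) = ((r.num : ℚ)) by exact_mod_cast h1]
    rw [← Rat.num_div_den r, hd]
    simp
  induction hx using AddSubmonoid.closure_induction with
  | mem y hy =>
    obtain ⟨n, rfl⟩ := hy
    refine ⟨r.num.toNat ^ n, ?_⟩
    conv_rhs => rw [hr]
    push_cast
    ring
  | zero => exact ⟨0, by simp⟩
  | add y z hy hz hy' hz' =>
    obtain ⟨m1, hm1⟩ := hy'
    obtain ⟨m2, hm2⟩ := hz'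
    exact ⟨m1 + m2, by push_cast; rw [hm1, hm2]⟩

lemma nat_mem_S {r : ℚ} (m : ℕ) : (m : ℚ) ∈ S r := by
  have h1 : (1 : ℚ) ∈ S r := by
    have := pow_mem_S r 0
    simpa using this
  have := AddSubmonoid.nsmul_mem (S r) h1 m
  rwa [nsmul_eq_mul, mul_one] at this

lemma atom_eq_one_den_one {r : ℚ} (h0 : 0 < r) (hd : r.den = 1) {a : ℚ}
    (ha : IsAtomS r a) : a = 1 := by
  obtain ⟨haS, ha0, hnd⟩ := ha
  obtain ⟨m, hm⟩ := mem_S_den_one h0 hd haS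
  have hm0 : m ≠ 0 := by
    intro h
    apply ha0
    rw [← hm, h]
    simp
  rcases Nat.lt_or_ge m 2 with h | h
  · interval_cases m
    · exact absurd rfl hm0
    · exact_mod_cast hm.symm
  · exfalso
    apply hnd
    refine ⟨1, ((m - 1 : ℕ) : ℚ), ?_, nat_mem_S _, one_ne_zero, ?_, ?_⟩
    · exact_mod_cast nat_mem_S (r := r) 1
    · exact Nat.cast_ne_zero.mpr (by omega)
    · rw [← hm, Nat.cast_sub (by omega)]
      push_cast
      ring

lemma length_unique_den_one {r : ℚ} (h0 : 0 < r) (hd : r.den = 1) {x : ℚ} {a b : ℕ}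
    (ha : a ∈ atomLengthSet r x) (hb : b ∈ atomLengthSet r x) : a = b := by
  have key : ∀ t : ℕ, t ∈ atomLengthSet r x → (t : ℚ) = x := by
    rintro t ⟨f, hf, hfs⟩
    rw [← hfs]
    have : ∀ i, f i = 1 := fun i => atom_eq_one_den_one h0 hd (hf i)
    rw [Finset.sum_congr rfl (fun i _ => this i)]
    simp
  exact_mod_cast (key a ha).trans (key b hb).symm

lemma elast_le_one_den_one {r : ℚ} (h0 : 0 < r) (hd : r.den = 1) (x : ℚ) :
    elast r x ≤ 1 := by
  by_cases hx : x = 0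
  · simp [elast, hx]
  rw [elast, if_neg hx]
  have huniq : ∀ a b : ℕ, a ∈ atomLengthSet r x → b ∈ atomLengthSet r x → a = b :=
    fun a b ha hb => length_unique_den_one h0 hd ha hb
  by_cases hne : (atomLengthSet r x).Nonempty
  · obtain ⟨a, ha⟩ := hne
    have hB : BddAbove (atomLengthSet r x) :=
      ⟨a, fun b hb => (huniq b a hb ha).le⟩
    rw [if_pos hB]
    have hs : sSup (atomLengthSet r x) = a :=
      le_antisymm (csSup_le ⟨a, ha⟩ fun b hb => (huniq b a hb ha).le) (le_csSup hB ha)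
    have hi : sInf (atomLengthSet r x) = a :=
      le_antisymm (Nat.sInf_le ha) (le_csInf ⟨a, ha⟩ fun b hb => (huniq a b ha hb).le)
    rw [hs, hi]
    have ha1 : 1 ≤ a := length_pos hx ha
    rw [ENNReal.div_self (by exact_mod_cast Nat.cast_ne_zero.mpr (by omega))
      (ENNReal.natCast_ne_top a)]
  · rw [Set.not_nonempty_iff_eq_empty] at hne
    rw [hne]
    simp [show sSup (∅ : Set ℕ) = 0 from by simp]

theorem stmt12 (r : ℚ) (h0 : 0 < r) (hat : r = 1 ∨ 1 < r.num) :
    elastM r < ⊤ ↔ ∀ k : ℕ, 0 < k → (⨆ l ∈ Uk r k, (l : ℕ∞)) < ⊤ := by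
  rcases Nat.lt_or_ge r.den 2 with hd | hd
  · have hd1 : r.den = 1 := by
      have := r.den_nz
      omega
    apply iff_of_true
    · have hle : elastM r ≤ 1 := iSup₂_le fun x _ => elast_le_one_den_one h0 hd1 x
      exact lt_of_le_of_lt hle ENNReal.one_lt_top
    · intro k hk
      have hle : (⨆ l ∈ Uk r k, (l : ℕ∞)) ≤ (k : ℕ∞) := by
        refine iSup₂_le fun l hl => ?_
        obtain ⟨x, hxS, hx0, hkL, hlL⟩ := hl
        rw [length_unique_den_one h0 hd1 hlL hkL]
      exact lt_of_le_of_lt hle (ENat.coe_lt_top k)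
  · have hn : 1 < r.num := by
      rcases hat with h1 | h1
      · exfalso
        rw [h1] at hd
        simp at hd
      · exact h1
    obtain ⟨hL, hR⟩ := den_ge_two_case r h0 hd hn
    exact iff_of_false hL hR
end

section
/- Let r ∈ ℚ with 0 < r < 1 and n(r) > 1 (so d(r) > 1 and S_r is atomic), let x ∈ S_r be nonzero, and let α be a factorization of x. Then |α| = min L(x) if and only if α_i < d(r) for every i ≥ 1. Moreover, x has exactly one factorization of minimum length. -/
open Finsupp
open scoped ENNReal

private lemma sum_eq_range (r : ℚ) (α : ℕ →₀ ℕ) (N : ℕ) (h : ∀ j, N < j → α j = 0) :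
    (α.sum fun i c => (c : ℚ) * r ^ i) = ∑ i ∈ Finset.range (N+1), (α i : ℚ) * r ^ i := by
  refine Finsupp.sum_of_support_subset α ?_ _ (by intros; simp)
  intro j hj
  rw [Finset.mem_range, Nat.lt_succ_iff]
  by_contra h'
  exact Finsupp.mem_support_iff.mp hj (h j (by omega))

private lemma key_int (r : ℚ) (α : ℕ →₀ ℕ) (N : ℕ) (h : ∀ j, N < j → α j = 0) :
    (α.sum fun i c => (c:ℚ) * r ^ i) * (r.den:ℚ)^N
      = ((∑ i ∈ Finset.range (N+1), (α i : ℤ) * r.num ^ i * (r.den:ℤ) ^ (N-i)) : ℚ) := by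
  rw [sum_eq_range r α N h, Finset.sum_mul]
  push_cast
  refine Finset.sum_congr rfl ?_
  intro i hi
  rw [Finset.mem_range, Nat.lt_succ_iff] at hi
  have h1 : (r.den:ℚ)^N = (r.den:ℚ)^i * (r.den:ℚ)^(N-i) := by
    rw [← pow_add]; congr 1; omega
  have h2 : r ^ i * (r.den:ℚ)^i = (r.num:ℚ)^i := by
    rw [← mul_pow, Rat.mul_den_eq_num]
  calc (α i:ℚ) * r^i * (r.den:ℚ)^N
      = (α i:ℚ) * (r^i * (r.den:ℚ)^i) * (r.den:ℚ)^(N-i) := by rw [h1]; ring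
    _ = _ := by rw [h2]

private lemma unique_reduced (r : ℚ) (hnum : 0 < r.num) :
    ∀ N (α β : ℕ →₀ ℕ), (∀ j, N < j → α j = 0) → (∀ j, N < j → β j = 0) →
    (∀ i, 1 ≤ i → α i < r.den) → (∀ i, 1 ≤ i → β i < r.den) →
    (α.sum fun i c => (c:ℚ)*r^i) = (β.sum fun i c => (c:ℚ)*r^i) → α = β := by
  intro N
  induction N with
  | zero =>
    intro α β hα hβ _ _ hsum
    rw [sum_eq_range r α 0 hα, sum_eq_range r β 0 hβ] at hsum
    simp only [zero_add, Finset.range_one, Finset.sum_singleton, pow_zero, mul_one] at hsum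
    have h00 : α 0 = β 0 := by exact_mod_cast hsum
    ext j
    rcases Nat.eq_zero_or_pos j with rfl | hj
    · exact h00
    · rw [hα j hj, hβ j hj]
  | succ N ih =>
    intro α β hα hβ hrα hrβ hsum
    have hint : (∑ i ∈ Finset.range (N+2), (α i : ℤ) * r.num ^ i * (r.den:ℤ) ^ (N+1-i))
              = (∑ i ∈ Finset.range (N+2), (β i : ℤ) * r.num ^ i * (r.den:ℤ) ^ (N+1-i)) := by
      have h1 := key_int r α (N+1) hα
      have h2 := key_int r β (N+1) hβ
      rw [hsum] at h1
      exact_mod_cast h1.symm.trans h2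
    have hdsum : ∀ γ : ℕ →₀ ℕ, (r.den:ℤ) ∣
        ∑ i ∈ Finset.range (N+1), (γ i : ℤ) * r.num ^ i * (r.den:ℤ) ^ (N+1-i) := by
      intro γ
      refine Finset.dvd_sum ?_
      intro i hi
      rw [Finset.mem_range] at hi
      exact Dvd.dvd.mul_left (dvd_pow_self _ (by omega)) _
    have esplit : ∀ γ : ℕ →₀ ℕ, ∑ i ∈ Finset.range (N+2), (γ i : ℤ) * r.num ^ i * (r.den:ℤ) ^ (N+1-i)
        = (∑ i ∈ Finset.range (N+1), (γ i : ℤ) * r.num ^ i * (r.den:ℤ) ^ (N+1-i))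
          + (γ (N+1):ℤ) * r.num ^ (N+1) := by
      intro γ; rw [Finset.sum_range_succ]; simp
    rw [esplit α, esplit β] at hint
    obtain ⟨a, ha⟩ := hdsum α
    obtain ⟨b, hb⟩ := hdsum β
    rw [ha, hb] at hint
    have hdvd : (r.den:ℤ) ∣ ((α (N+1):ℤ) - (β (N+1):ℤ)) * r.num ^ (N+1) := by
      refine ⟨b - a, ?_⟩
      linear_combination hint
    have hcop : IsCoprime (r.den:ℤ) (r.num ^ (N+1)) := by
      refine IsCoprime.pow_right ?_
      rw [Int.isCoprime_iff_gcd_eq_one]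
      have := Nat.Coprime.symm r.reduced
      simpa [Int.gcd] using this
    have hdvd2 : (r.den:ℤ) ∣ ((α (N+1):ℤ) - (β (N+1):ℤ)) := hcop.dvd_of_dvd_mul_right hdvd
    have htop : α (N+1) = β (N+1) := by
      have h1 := hrα (N+1) (by omega)
      have h2 := hrβ (N+1) (by omega)
      have h3 : |(α (N+1):ℤ) - (β (N+1):ℤ)| < (r.den:ℤ) := by rw [abs_lt]; omega
      have := Int.eq_zero_of_abs_lt_dvd hdvd2 h3
      omega
    -- erase and apply IH
    have hesum : ∀ γ : ℕ →₀ ℕ, (∀ j, N+1 < j → γ j = 0) →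
        ((Finsupp.erase (N+1) γ).sum fun i c => (c:ℚ)*r^i)
          = (γ.sum fun i c => (c:ℚ)*r^i) - (γ (N+1):ℚ) * r^(N+1) := by
      intro γ hγ
      rw [sum_eq_range r _ N (by
        intro j hj
        rcases eq_or_ne j (N+1) with rfl | hne
        · simp
        · rw [Finsupp.erase_ne hne]; exact hγ j (by omega)),
        sum_eq_range r γ (N+1) hγ]
      conv_rhs => rw [Finset.sum_range_succ]
      rw [add_sub_cancel_right]
      refine Finset.sum_congr rfl ?_
      intro i hi
      rw [Finset.mem_range] at hi
      rw [Finsupp.erase_ne (by omega)]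
    have herase : Finsupp.erase (N+1) α = Finsupp.erase (N+1) β := by
      apply ih
      · intro j hj
        rcases eq_or_ne j (N+1) with rfl | hne
        · simp
        · rw [Finsupp.erase_ne hne]; exact hα j (by omega)
      · intro j hj
        rcases eq_or_ne j (N+1) with rfl | hne
        · simp
        · rw [Finsupp.erase_ne hne]; exact hβ j (by omega)
      · intro i hi
        rcases eq_or_ne i (N+1) with rfl | hne
        · rw [Finsupp.erase_same]
          have := hrα (N+1) (by omega); omega
        · rw [Finsupp.erase_ne hne]; exact hrα i hi
      · intro i hi
        rcases eq_or_ne i (N+1) with rfl | hne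
        · rw [Finsupp.erase_same]
          have := hrβ (N+1) (by omega); omega
        · rw [Finsupp.erase_ne hne]; exact hrβ i hi
      · rw [hesum α hα, hesum β hβ, hsum, htop]
    ext j
    rcases eq_or_ne j (N+1) with rfl | hne
    · exact htop
    · have := DFunLike.congr_fun herase j
      rwa [Finsupp.erase_ne hne, Finsupp.erase_ne hne] at this


private lemma reduce_step (r : ℚ) (h0 : 0 < r) (h1 : r < 1)
    (α : ℕ →₀ ℕ) (i : ℕ) (hi : 1 ≤ i) (hge : r.den ≤ α i) :
    ∃ α' : ℕ →₀ ℕ, (α'.sum fun j c => (c:ℚ) * r ^ j) = (α.sum fun j c => (c:ℚ) * r ^ j)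
      ∧ flen α' < flen α := by
  have hnum : 0 < r.num := Rat.num_pos.mpr h0
  have hnd : r.num < (r.den:ℤ) := by
    have hd : (0:ℚ) < r.den := by positivity
    have : (r.num : ℚ) < r.den := by
      rw [← Rat.mul_den_eq_num r]; nlinarith
    exact_mod_cast this
  set n := r.num.toNat with hn'
  have hnq : ((n:ℕ):ℚ) = (r.num:ℚ) := by
    have := Int.toNat_of_nonneg hnum.le
    exact_mod_cast congrArg (Int.cast : ℤ → ℚ) this
  refine ⟨Finsupp.single (i-1) n + (Finsupp.single i (α i - r.den) + Finsupp.erase i α), ?_, ?_⟩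
  · have hz : ∀ (a : ℕ), ((0:ℕ):ℚ) * r ^ a = 0 := by intro a; simp
    have hadd : ∀ (a : ℕ) (b₁ b₂ : ℕ), ((b₁ + b₂ : ℕ):ℚ) * r ^ a = (b₁:ℚ) * r ^ a + (b₂:ℚ) * r ^ a := by
      intro a b₁ b₂; push_cast; ring
    rw [Finsupp.sum_add_index' hz hadd, Finsupp.sum_add_index' hz hadd,
      Finsupp.sum_single_index (hz _), Finsupp.sum_single_index (hz _)]
    conv_rhs => rw [← Finsupp.single_add_erase i α, Finsupp.sum_add_index' hz hadd,
      Finsupp.sum_single_index (hz _)]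
    have key : (r.num:ℚ) * r^(i-1) = (r.den:ℚ) * r^i := by
      rw [show r^i = r^(i-1) * r from by rw [← pow_succ]; congr 1; omega]
      rw [← Rat.mul_den_eq_num r]; ring
    rw [hnq, Nat.cast_sub hge]
    push_cast
    linear_combination key
  · have hz : ∀ (a : ℕ), (fun (_ : ℕ) (c : ℕ) => c) a 0 = 0 := fun a => rfl
    have hadd : ∀ (a : ℕ) (b₁ b₂ : ℕ), (fun (_ : ℕ) (c : ℕ) => c) a (b₁ + b₂)
        = (fun (_ : ℕ) (c : ℕ) => c) a b₁ + (fun (_ : ℕ) (c : ℕ) => c) a b₂ := fun _ _ _ => rfl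
    have hsplit : flen α = α i + flen (Finsupp.erase i α) := by
      unfold flen
      conv_lhs => rw [← Finsupp.single_add_erase i α]
      rw [Finsupp.sum_add_index' hz hadd, Finsupp.sum_single_index rfl]
    unfold flen
    rw [Finsupp.sum_add_index' hz hadd, Finsupp.sum_add_index' hz hadd,
      Finsupp.sum_single_index rfl, Finsupp.sum_single_index rfl]
    unfold flen at hsplit
    omega

theorem stmt13 (r : ℚ) (h0 : 0 < r) (h1 : r < 1) (hn : 1 < r.num)
    (x : ℚ) (hx : x ∈ S r) (hx0 : x ≠ 0)
    (α : ℕ →₀ ℕ) (hα : IsFactorization r x α) :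
    (flen α = sInf (lengthSet r x) ↔ ∀ i : ℕ, 1 ≤ i → α i < r.den) ∧
    ∃! β : ℕ →₀ ℕ, IsFactorization r x β ∧ flen β = sInf (lengthSet r x) := by
  have hnum : 0 < r.num := Rat.num_pos.mpr h0
  have hne : (lengthSet r x).Nonempty := ⟨flen α, α, hα, rfl⟩
  obtain ⟨γ, hγf, hγl⟩ := Nat.sInf_mem hne
  have min_red : ∀ β : ℕ →₀ ℕ, IsFactorization r x β → flen β = sInf (lengthSet r x) →
      ∀ i, 1 ≤ i → β i < r.den := by
    intro β hβ hβl i hi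
    by_contra hge
    push_neg at hge
    obtain ⟨β', hβ's, hβ'l⟩ := reduce_step r h0 h1 β i hi hge
    have hmem : flen β' ∈ lengthSet r x := ⟨β', by rwa [IsFactorization, hβ's], rfl⟩
    have := Nat.sInf_le hmem
    omega
  have uniq : ∀ β β' : ℕ →₀ ℕ, IsFactorization r x β → IsFactorization r x β' →
      (∀ i, 1 ≤ i → β i < r.den) → (∀ i, 1 ≤ i → β' i < r.den) → β = β' := by
    intro β β' hβ hβ' hr hr'
    set N := (β.support ∪ β'.support).sup id with hN
    have hb : ∀ (δ : ℕ →₀ ℕ), δ.support ⊆ β.support ∪ β'.support → ∀ j, N < j → δ j = 0 := by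
      intro δ hδ j hj
      by_contra hz
      have : j ∈ β.support ∪ β'.support := hδ (Finsupp.mem_support_iff.mpr hz)
      have hle : id j ≤ N := Finset.le_sup (f := id) this
      simp only [id] at hle
      omega
    refine unique_reduced r hnum N β β' ?_ ?_ hr hr' ?_
    · exact hb β (Finset.subset_union_left) 
    · exact hb β' (Finset.subset_union_right)
    · rw [IsFactorization] at hβ hβ'
      rw [hβ, hβ']
  have hγred : ∀ i, 1 ≤ i → γ i < r.den := min_red γ hγf hγl
  constructor
  · constructor
    · intro hl
      exact min_red α hα hl
    · intro hred
      have : α = γ := uniq α γ hα hγf hred hγred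
      rw [this, hγl]
  · refine ⟨γ, ⟨hγf, hγl⟩, ?_⟩
    intro β ⟨hβf, hβl⟩
    exact uniq β γ hβf hγf (min_red β hβf hβl) hγred
end

section
/- Let r ∈ ℚ with 0 < r < 1 and n(r) > 1 (so d(r) > 1 and S_r is atomic), let x ∈ S_r be nonzero, and let α be any factorization of x. Then L(x) is unbounded (i.e., sup L(x) = ∞) if and only if α_i ≥ n(r) for some i ∈ ℕ₀. -/
open Finsupp
open scoped ENNReal

/- Auxiliary lemmas -/

lemma sum_add_single (r : ℚ) (β : ℕ →₀ ℕ) (j c : ℕ) :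
    ((β + single j c).sum fun i c => (c : ℚ) * r ^ i)
      = (β.sum fun i c => (c : ℚ) * r ^ i) + c * r ^ j := by
  rw [Finsupp.sum_add_index' (by simp) (by intros; push_cast; ring),
    Finsupp.sum_single_index (by simp)]

lemma flen_add_single (β : ℕ →₀ ℕ) (j c : ℕ) :
    flen (β + single j c) = flen β + c := by
  unfold flen
  rw [Finsupp.sum_add_index' (by simp) (by intros; rfl),
    Finsupp.sum_single_index (by simp)]

lemma val_le_flen (β : ℕ →₀ ℕ) (j : ℕ) : β j ≤ flen β := by
  by_cases h : j ∈ β.support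
  · exact Finset.single_le_sum (fun i _ => Nat.zero_le _) h
  · simp [Finsupp.notMem_support_iff.mp h]

/-- Swap `c1` copies of the atom `r^i1` for `c2` copies of `r^i2`, when they have the
same total value. -/
lemma swap_move (r x : ℚ) (β : ℕ →₀ ℕ) (hβ : IsFactorization r x β)
    (i1 i2 c1 c2 : ℕ) (hle : c1 ≤ β i1)
    (hval : (c1 : ℚ) * r ^ i1 = (c2 : ℚ) * r ^ i2) :
    IsFactorization r x (β - single i1 c1 + single i2 c2) ∧
    flen (β - single i1 c1 + single i2 c2) + c1 = flen β + c2 ∧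
    (∀ j, j ≠ i2 → (β - single i1 c1 + single i2 c2) j = β j - (single i1 c1) j) ∧
    (β - single i1 c1 + single i2 c2) i2 = (β i2 - (single i1 c1) i2) + c2 := by
  have hg : (β - single i1 c1) + single i1 c1 = β :=
    tsub_add_cancel_of_le (Finsupp.single_le_iff.mpr hle)
  have hsum : ((β - single i1 c1).sum fun i c => (c : ℚ) * r ^ i) + c1 * r ^ i1 = x := by
    rw [← sum_add_single r _ i1 c1, hg]; exact hβ
  refine ⟨?_, ?_, ?_, ?_⟩
  · unfold IsFactorization
    rw [sum_add_single, ← hval]; exact hsum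
  · have h1 : flen (β - single i1 c1 + single i2 c2) = flen (β - single i1 c1) + c2 :=
      flen_add_single _ _ _
    have h2 : flen (β - single i1 c1) + c1 = flen β := by
      rw [← flen_add_single (β - single i1 c1) i1 c1, hg]
    omega
  · intro j hj
    simp [Finsupp.add_apply, Finsupp.tsub_apply, Finsupp.single_apply, hj]
  · simp [Finsupp.add_apply, Finsupp.tsub_apply, Finsupp.single_apply]

/-- Uniqueness at the level of natural numbers: coefficients `< d` at positive indices
are determined by the weighted sum. -/
lemma natUnique (n d : ℕ) (hd : 0 < d) (hcop : Nat.Coprime n d) :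
    ∀ M (b c : ℕ → ℕ), (∀ j, b (j+1) < d) → (∀ j, c (j+1) < d) →
    (∑ i ∈ Finset.range (M+1), b i * n ^ i * d ^ (M - i)) =
      (∑ i ∈ Finset.range (M+1), c i * n ^ i * d ^ (M - i)) →
    ∀ i < M + 1, b i = c i := by
  intro M
  induction M with
  | zero =>
    intro b c hb hc heq i hi
    interval_cases i
    simpa using heq
  | succ M ih =>
    intro b c hb hc heq i hi
    rw [Finset.sum_range_succ (f := fun i => b i * n ^ i * d ^ (M + 1 - i)),
      Finset.sum_range_succ (f := fun i => c i * n ^ i * d ^ (M + 1 - i))] at heq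
    have hsplit : ∀ (f : ℕ → ℕ),
        (∑ i ∈ Finset.range (M+1), f i * n ^ i * d ^ (M + 1 - i)) =
          d * ∑ i ∈ Finset.range (M+1), f i * n ^ i * d ^ (M - i) := by
      intro f
      rw [Finset.mul_sum]
      apply Finset.sum_congr rfl
      intro j hj
      have : M + 1 - j = (M - j) + 1 := by
        have := Finset.mem_range.mp hj; omega
      rw [this, pow_succ]; ring
    rw [hsplit b, hsplit c] at heq
    simp only [Nat.add_sub_cancel, Nat.sub_self, pow_zero, mul_one] at heq
    have hmod : b (M+1) * n ^ (M+1) ≡ c (M+1) * n ^ (M+1) [MOD d] := by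
      unfold Nat.ModEq
      calc b (M+1) * n ^ (M+1) % d
          = (d * (∑ i ∈ Finset.range (M+1), b i * n ^ i * d ^ (M - i))
              + b (M+1) * n ^ (M+1)) % d := by rw [Nat.mul_add_mod]
        _ = (d * (∑ i ∈ Finset.range (M+1), c i * n ^ i * d ^ (M - i))
              + c (M+1) * n ^ (M+1)) % d := by rw [heq]
        _ = c (M+1) * n ^ (M+1) % d := by rw [Nat.mul_add_mod]
    have htop : b (M+1) = c (M+1) := by
      have hcop' : Nat.gcd d (n ^ (M+1)) = 1 := (Nat.Coprime.pow_right _ hcop.symm)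
      have := Nat.ModEq.cancel_right_of_coprime hcop' hmod
      have hb' := hb M; have hc' := hc M
      calc b (M+1) = b (M+1) % d := (Nat.mod_eq_of_lt hb').symm
        _ = c (M+1) % d := this
        _ = c (M+1) := Nat.mod_eq_of_lt hc'
    rcases Nat.lt_succ_iff_lt_or_eq.mp hi with hi' | hi'
    · apply ih b c hb hc _ i hi'
      have hsums : d * (∑ i ∈ Finset.range (M+1), b i * n ^ i * d ^ (M - i))
          = d * (∑ i ∈ Finset.range (M+1), c i * n ^ i * d ^ (M - i)) := by
        rw [htop] at heq; omega
      exact Nat.eq_of_mul_eq_mul_left hd hsums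
    · rw [hi']; exact htop

/-- Two factorizations whose coefficients at positive indices are `< r.den` coincide. -/
lemma reduced_unique (r x : ℚ) (h0 : 0 < r) (hcop : Nat.Coprime r.num.toNat r.den)
    (β γ : ℕ →₀ ℕ) (hβ : IsFactorization r x β) (hγ : IsFactorization r x γ)
    (hbd : ∀ j, β (j+1) < r.den) (hcd : ∀ j, γ (j+1) < r.den) : β = γ := by
  set n := r.num.toNat with hn
  set d := r.den with hdd
  have hd : 0 < d := r.pos
  have hnum : (0:ℤ) < r.num := Rat.num_pos.mpr h0
  have hcast : ((n : ℕ) : ℚ) = (r.num : ℚ) := by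
    rw [hn]; exact_mod_cast congrArg (Int.cast : ℤ → ℚ) (Int.toNat_of_nonneg hnum.le)
  have hrd : r * (d : ℚ) = (n : ℚ) := by
    rw [hcast, hdd]; exact_mod_cast Rat.mul_den_eq_num r
  set M := ((β.support ∪ γ.support).sup id) with hM
  have hterm : ∀ i ≤ M, r ^ i * (d : ℚ) ^ M = (n : ℚ) ^ i * (d : ℚ) ^ (M - i) := by
    intro i hi
    have h : M = i + (M - i) := by omega
    rw [h, pow_add, ← mul_assoc, ← mul_pow, hrd]
    ring_nf
    rw [Nat.add_sub_cancel_left]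
  have hSum : ∀ δ : ℕ →₀ ℕ, δ.support ⊆ Finset.range (M+1) → IsFactorization r x δ →
      (((∑ i ∈ Finset.range (M+1), δ i * n ^ i * d ^ (M - i)) : ℕ) : ℚ) = x * (d:ℚ) ^ M := by
    intro δ hsub hδ
    have h1 : (δ.sum fun i c => (c : ℚ) * r ^ i)
        = ∑ i ∈ Finset.range (M+1), (δ i : ℚ) * r ^ i :=
      Finsupp.sum_of_support_subset δ hsub _ (by intros; simp)
    rw [← hδ, h1, Finset.sum_mul]
    push_cast
    apply Finset.sum_congr rfl
    intro i hi
    have := hterm i (by have := Finset.mem_range.mp hi; omega)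
    rw [mul_assoc, ← this]; ring
  have hsubβ : β.support ⊆ Finset.range (M+1) := by
    intro i hi
    have : i ≤ M := Finset.le_sup (f := id) (Finset.mem_union_left _ hi)
    exact Finset.mem_range.mpr (by omega)
  have hsubγ : γ.support ⊆ Finset.range (M+1) := by
    intro i hi
    have : i ≤ M := Finset.le_sup (f := id) (Finset.mem_union_right _ hi)
    exact Finset.mem_range.mpr (by omega)
  have heq : (∑ i ∈ Finset.range (M+1), β i * n ^ i * d ^ (M - i))
      = (∑ i ∈ Finset.range (M+1), γ i * n ^ i * d ^ (M - i)) := by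
    have := (hSum β hsubβ hβ).trans (hSum γ hsubγ hγ).symm
    exact_mod_cast this
  have key := natUnique n d hd hcop M (β ·) (γ ·) hbd hcd heq
  ext i
  by_cases hi : i < M + 1
  · exact key i hi
  · have h1 : β i = 0 := Finsupp.notMem_support_iff.mp
      (fun h => hi (Finset.mem_range.mp (hsubβ h)))
    have h2 : γ i = 0 := Finsupp.notMem_support_iff.mp
      (fun h => hi (Finset.mem_range.mp (hsubγ h)))
    rw [h1, h2]

theorem stmt14 (r : ℚ) (h0 : 0 < r) (h1 : r < 1) (hn : 1 < r.num)
    (x : ℚ) (hx : x ∈ S r) (hx0 : x ≠ 0)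
    (α : ℕ →₀ ℕ) (hα : IsFactorization r x α) :
    ¬ BddAbove (lengthSet r x) ↔ ∃ i : ℕ, r.num.toNat ≤ α i := by
  set n := r.num.toNat with hndef
  set d := r.den with hddef
  have hd : 0 < d := r.pos
  have hnum : (0:ℤ) < r.num := by omega
  have hn2 : 2 ≤ n := by omega
  have hnd : n < d := by
    have := Rat.lt_one_iff_num_lt_denom.mpr h1
    omega
  have hcop : Nat.Coprime n d := by
    have h := r.reduced
    have : r.num.toNat = r.num.natAbs := by omega
    rw [hndef, hddef, this]; exact h
  have hcast : ((n : ℕ) : ℚ) = (r.num : ℚ) := by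
    rw [hndef]; exact_mod_cast congrArg (Int.cast : ℤ → ℚ) (Int.toNat_of_nonneg hnum.le)
  have hrd : r * (d : ℚ) = (n : ℚ) := by
    rw [hcast, hddef]; exact_mod_cast Rat.mul_den_eq_num r
  have hmove : ∀ j : ℕ, (n : ℚ) * r ^ j = (d : ℚ) * r ^ (j+1) := by
    intro j
    rw [pow_succ, ← hrd]; ring
  constructor
  · -- unbounded → some coefficient ≥ n
    intro hnb
    by_contra hno
    push_neg at hno
    -- α is the unique factorization
    have uniq_aux : ∀ N (β : ℕ →₀ ℕ), flen β ≤ N → IsFactorization r x β → β = α := by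
      intro N
      induction N with
      | zero =>
        intro β hlen hf
        have hβ0 : β = 0 := by
          ext j; have := val_le_flen β j; simp; omega
        rw [hβ0] at hf
        simp [IsFactorization] at hf
        exact absurd hf.symm hx0
      | succ N ih =>
        intro β hlen hf
        by_cases hcase : ∃ j, d ≤ β (j+1)
        · obtain ⟨j, hj⟩ := hcase
          obtain ⟨hf', hl', _, htop⟩ :=
            swap_move r x β hf (j+1) j d n hj (hmove j).symm
          have hlen' : flen (β - single (j+1) d + single j n) ≤ N := by omega
          have hβ' := ih _ hlen' hf'
          rw [hβ'] at htop
          have h5 : (single (j+1) d : ℕ →₀ ℕ) j = 0 := by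
            simp [Finsupp.single_apply]
          have := hno j
          omega
        · push_neg at hcase
          exact reduced_unique r x h0 hcop β α hf hα hcase
            (fun j => lt_trans (hno (j+1)) hnd)
      -- end induction
    exfalso
    apply hnb
    refine ⟨flen α, ?_⟩
    rintro t ⟨β, hf, rfl⟩
    rw [uniq_aux (flen β) β le_rfl hf]
  · -- some coefficient ≥ n → unbounded
    rintro ⟨i, hi⟩
    have grow : ∀ k, ∃ β : ℕ →₀ ℕ, ∃ j, IsFactorization r x β ∧ n ≤ β j ∧
        flen α + k ≤ flen β := by
      intro k
      induction k with
      | zero => exact ⟨α, i, hα, hi, le_refl _⟩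
      | succ k ih =>
        obtain ⟨β, j, hf, hc, hl⟩ := ih
        obtain ⟨hf', hl', _, htop⟩ := swap_move r x β hf j (j+1) n d hc (hmove j)
        refine ⟨β - single j n + single (j+1) d, j+1, hf', ?_, ?_⟩
        · omega
        · omega
    rintro ⟨b, hb⟩
    obtain ⟨β, j, hf, _, hl⟩ := grow (b + 1)
    have hmem : flen β ∈ lengthSet r x := ⟨β, hf, rfl⟩
    have := hb hmem
    omega
end

section
/- Let r ∈ ℚ_{>1} \ ℕ (so n(r) > d(r) > 1 and S_r is atomic), let x ∈ S_r be nonzero, and let α be a factorization of x. Then |α| = min L(x) if and only if α_i < n(r) for every i ∈ ℕ₀. Moreover, x has exactly one factorization of minimum length. -/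
open Finsupp
open scoped ENNReal

section facts
variable {r : ℚ}

lemma hnum_pos (h1 : 1 < r) : 0 < r.num := by
  have : (0:ℚ) < r := lt_trans one_pos h1
  exact Rat.num_pos.2 this

lemma hND (h1 : 1 < r) : (r.num.toNat : ℚ) = r * r.den := by
  have h0 : (0:ℚ) < r := lt_trans one_pos h1
  have : (r.num.toNat : ℤ) = r.num := Int.toNat_of_nonneg (le_of_lt (hnum_pos h1))
  rw [show ((r.num.toNat : ℚ)) = ((r.num.toNat : ℤ) : ℚ) by push_cast; ring, this]
  rw [mul_comm]
  exact_mod_cast (Rat.den_mul_eq_num r).symm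

lemma hDltN (h1 : 1 < r) : r.den < r.num.toNat := by
  have hd0 : (0:ℚ) < (r.den : ℚ) := by exact_mod_cast r.pos
  have : (r.den : ℚ) < r * r.den := by
    nlinarith [r.pos, hd0]
  rw [← hND h1] at this
  exact_mod_cast this

lemma hcopDN (h1 : 1 < r) : Nat.Coprime r.den r.num.toNat := by
  have := r.reduced
  have h : r.num.natAbs = r.num.toNat := by
    have := hnum_pos (r := r) h1; omega
  rw [h] at this
  exact this.symm
end facts

lemma bridge {r : ℚ} (h1 : 1 < r) (α : ℕ →₀ ℕ) (M : ℕ) (hsupp : ∀ i, M ≤ i → α i = 0) :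
    (α.sum fun i c => (c : ℚ) * r ^ i) * (r.den : ℚ) ^ M =
      ((∑ i ∈ Finset.range M, α i * r.num.toNat ^ i * r.den ^ (M - i) : ℕ) : ℚ) := by
  have hsub : α.support ⊆ Finset.range M := by
    intro i hi
    rw [Finset.mem_range]
    by_contra hlt
    exact (Finsupp.mem_support_iff.1 hi) (hsupp i (by omega))
  rw [Finsupp.sum_of_support_subset α hsub _ (fun i _ => by simp)]
  push_cast
  rw [Finset.sum_mul]
  apply Finset.sum_congr rfl
  intro i hi
  have hiM : i < M := Finset.mem_range.1 hi
  have hpow : (r.den : ℚ) ^ M = (r.den : ℚ) ^ i * (r.den : ℚ) ^ (M - i) := by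
    rw [← pow_add]; congr 1; omega
  have hrd : r ^ i * (r.den : ℚ) ^ i = (r.num.toNat : ℚ) ^ i := by
    rw [← mul_pow, ← hND h1]
  calc (α i : ℚ) * r ^ i * (r.den : ℚ) ^ M
      = (α i : ℚ) * (r ^ i * (r.den:ℚ) ^ i) * (r.den:ℚ) ^ (M - i) := by rw [hpow]; ring
    _ = (α i : ℚ) * (r.num.toNat : ℚ) ^ i * (r.den : ℚ) ^ (M - i) := by rw [hrd]


private lemma keyU (N D : ℕ) (hN : 0 < N) (hcop : Nat.Coprime D N) :
    ∀ M (f g : ℕ → ℕ), (∀ i, f i < N) → (∀ i, g i < N) →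
    (∑ i ∈ Finset.range M, f i * N ^ i * D ^ (M - i)) =
      (∑ i ∈ Finset.range M, g i * N ^ i * D ^ (M - i)) →
    ∀ i < M, f i = g i := by
  intro M
  induction M with
  | zero => intro f g _ _ _ i hi; omega
  | succ M ih =>
    intro f g hf hg heq i hi
    rw [Finset.sum_range_succ', Finset.sum_range_succ'] at heq
    have hterm : ∀ h : ℕ → ℕ, ∀ j ∈ Finset.range M,
        h (j+1) * N ^ (j+1) * D ^ (M + 1 - (j+1)) = N * (h (j+1) * N ^ j * D ^ (M - j)) := by
      intro h j hj
      have hMj : M + 1 - (j + 1) = M - j := by omega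
      rw [hMj, pow_succ]
      ring
    rw [Finset.sum_congr rfl (hterm f), Finset.sum_congr rfl (hterm g),
      ← Finset.mul_sum, ← Finset.mul_sum] at heq
    simp only [pow_zero, mul_one, Nat.sub_zero, one_mul] at heq
    set Sf := ∑ j ∈ Finset.range M, f (j+1) * N ^ j * D ^ (M - j) with hSf
    set Sg := ∑ j ∈ Finset.range M, g (j+1) * N ^ j * D ^ (M - j) with hSg
    have hmod : f 0 * D ^ (M+1) ≡ g 0 * D ^ (M+1) [MOD N] := by
      have e1 : (f 0 * D ^ (M+1)) % N = (f 0 * D ^ (M+1) + N * Sf) % N :=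
        (Nat.add_mul_mod_self_left _ _ _).symm
      have e2 : (g 0 * D ^ (M+1)) % N = (g 0 * D ^ (M+1) + N * Sg) % N :=
        (Nat.add_mul_mod_self_left _ _ _).symm
      unfold Nat.ModEq
      rw [e1, e2]
      congr 1
      omega
    have h0 : f 0 = g 0 := by
      have hc : Nat.Coprime N (D ^ (M+1)) := Nat.Coprime.pow_right _ hcop.symm
      have hm := Nat.ModEq.cancel_right_of_coprime hc hmod
      unfold Nat.ModEq at hm
      rw [Nat.mod_eq_of_lt (hf 0), Nat.mod_eq_of_lt (hg 0)] at hm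
      exact hm
    have hS : Sf = Sg := by
      rw [h0] at heq
      exact Nat.eq_of_mul_eq_mul_left hN (Nat.add_right_cancel heq)
    rcases Nat.eq_zero_or_pos i with rfl | hpos
    · exact h0
    · obtain ⟨j, rfl⟩ := Nat.exists_eq_succ_of_ne_zero (by omega : i ≠ 0)
      exact ih (fun k => f (k+1)) (fun k => g (k+1)) (fun k => hf _) (fun k => hg _) hS j (by omega)


lemma uniq {r x : ℚ} (h1 : 1 < r) {α β : ℕ →₀ ℕ}
    (hα : IsFactorization r x α) (hβ : IsFactorization r x β)
    (hαlt : ∀ i, α i < r.num.toNat) (hβlt : ∀ i, β i < r.num.toNat) : α = β := by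
  set M := (α.support ∪ β.support).sup id + 1 with hM
  have hsα : ∀ i, M ≤ i → α i = 0 := by
    intro i hi
    by_contra h
    have : i ∈ α.support ∪ β.support := Finset.mem_union_left _ (Finsupp.mem_support_iff.2 h)
    have := Finset.le_sup (f := id) this
    simp only [id] at this
    omega
  have hsβ : ∀ i, M ≤ i → β i = 0 := by
    intro i hi
    by_contra h
    have : i ∈ α.support ∪ β.support := Finset.mem_union_right _ (Finsupp.mem_support_iff.2 h)
    have := Finset.le_sup (f := id) this
    simp only [id] at this
    omega
  have h1' := bridge h1 α M hsα
  have h2' := bridge h1 β M hsβ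
  rw [hα] at h1'
  rw [hβ] at h2'
  have hcast : ((∑ i ∈ Finset.range M, α i * r.num.toNat ^ i * r.den ^ (M - i) : ℕ) : ℚ)
      = ((∑ i ∈ Finset.range M, β i * r.num.toNat ^ i * r.den ^ (M - i) : ℕ) : ℚ) := by
    rw [← h1', ← h2']
  have hnat := Nat.cast_inj (R := ℚ) |>.mp hcast
  have := keyU r.num.toNat r.den (by have := hDltN h1; omega) (hcopDN h1) M
    (fun i => α i) (fun i => β i) hαlt hβlt hnat
  ext i
  by_cases hi : i < M
  · exact this i hi
  · rw [hsα i (by omega), hsβ i (by omega)]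

lemma step_lemma {r x : ℚ} (h1 : 1 < r) {α : ℕ →₀ ℕ} (hα : IsFactorization r x α)
    {j : ℕ} (hj : r.num.toNat ≤ α j) :
    ∃ α' : ℕ →₀ ℕ, IsFactorization r x α' ∧ flen α' + r.num.toNat = flen α + r.den := by
  classical
  set N := r.num.toNat
  set D := r.den
  refine ⟨(α.erase j + Finsupp.single j (α j - N)) + Finsupp.single (j+1) D, ?_, ?_⟩
  · unfold IsFactorization at *
    have h0 : ∀ i : ℕ, ((0:ℕ):ℚ) * r ^ i = 0 := by intro i; simp
    have hadd : ∀ (i : ℕ) (b₁ b₂ : ℕ), ((b₁ + b₂ : ℕ):ℚ) * r ^ i = (b₁:ℚ) * r ^ i + (b₂:ℚ) * r ^ i := by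
      intro i b₁ b₂; push_cast; ring
    rw [Finsupp.sum_add_index' h0 hadd, Finsupp.sum_add_index' h0 hadd,
      Finsupp.sum_single_index (h0 _), Finsupp.sum_single_index (h0 _)]
    have hsplit : (α.erase j).sum (fun i c => (c:ℚ) * r ^ i) + (α j : ℚ) * r ^ j = x := by
      rw [← hα]
      conv_rhs => rw [← Finsupp.single_add_erase j α]
      rw [Finsupp.sum_add_index' h0 hadd, Finsupp.sum_single_index (h0 _)]
      ring
    have hcast : ((α j - N : ℕ) : ℚ) = (α j : ℚ) - (N : ℚ) := by
      push_cast [Nat.cast_sub hj]; ring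
    have hDN : (D : ℚ) * r ^ (j+1) = (N : ℚ) * r ^ j := by
      rw [pow_succ]
      have := hND h1
      calc (D:ℚ) * (r ^ j * r) = ((r * r.den)) * r ^ j := by ring
        _ = (N:ℚ) * r ^ j := by rw [← this]
    rw [hcast]
    linarith [hsplit, hDN]
  · have hflen_add : ∀ a b : ℕ →₀ ℕ, flen (a + b) = flen a + flen b := by
      intro a b
      exact Finsupp.sum_add_index' (fun _ => rfl) (fun _ b₁ b₂ => rfl)
    have hflen_single : ∀ (i c : ℕ), flen (Finsupp.single i c) = c := by
      intro i c
      unfold flen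
      exact Finsupp.sum_single_index rfl
    have hα_split : flen α = flen (α.erase j) + α j := by
      conv_lhs => rw [← Finsupp.single_add_erase j α]
      rw [hflen_add, hflen_single]
      ring
    rw [hflen_add, hflen_add, hflen_single, hflen_single, hα_split]
    omega

lemma reduce {r x : ℚ} (h1 : 1 < r) :
    ∀ L (α : ℕ →₀ ℕ), flen α ≤ L → IsFactorization r x α →
    ∃ β : ℕ →₀ ℕ, IsFactorization r x β ∧ (∀ i, β i < r.num.toNat) ∧ flen β ≤ flen α := by
  intro L
  induction L with
  | zero =>
    intro α hL hα
    by_cases hall : ∀ i, α i < r.num.toNat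
    · exact ⟨α, hα, hall, le_refl _⟩
    · push_neg at hall
      obtain ⟨j, hj⟩ := hall
      obtain ⟨α', _, hlen⟩ := step_lemma h1 hα hj
      have := hDltN h1
      omega
  | succ L ih =>
    intro α hL hα
    by_cases hall : ∀ i, α i < r.num.toNat
    · exact ⟨α, hα, hall, le_refl _⟩
    · push_neg at hall
      obtain ⟨j, hj⟩ := hall
      obtain ⟨α', hα', hlen⟩ := step_lemma h1 hα hj
      have hDN := hDltN h1
      have hle : flen α' ≤ L := by omega
      obtain ⟨β, hβ, hβlt, hβle⟩ := ih α' hle hα'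
      exact ⟨β, hβ, hβlt, by omega⟩

lemma exists_fact {r x : ℚ} (hx : x ∈ S r) : ∃ α : ℕ →₀ ℕ, IsFactorization r x α := by
  classical
  refine AddSubmonoid.closure_induction ?_ ?_ ?_ hx
  · rintro y ⟨n, rfl⟩
    exact ⟨Finsupp.single n 1, by unfold IsFactorization; rw [Finsupp.sum_single_index (by simp)]; simp⟩
  · exact ⟨0, by unfold IsFactorization; simp⟩
  · rintro y z - - ⟨a, ha⟩ ⟨b, hb⟩
    refine ⟨a + b, ?_⟩
    unfold IsFactorization at *
    rw [Finsupp.sum_add_index' (fun i => by simp) (fun i b₁ b₂ => by push_cast; ring), ha, hb]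


theorem stmt15 (r : ℚ) (h1 : 1 < r) (hd : r.den ≠ 1)
    (x : ℚ) (hx : x ∈ S r) (hx0 : x ≠ 0)
    (α : ℕ →₀ ℕ) (hα : IsFactorization r x α) :
    (flen α = sInf (lengthSet r x) ↔ ∀ i : ℕ, α i < r.num.toNat) ∧
    ∃! β : ℕ →₀ ℕ, IsFactorization r x β ∧ flen β = sInf (lengthSet r x) := by
  classical
  have hDN := hDltN h1
  obtain ⟨γ, hγ, hγlt, hγle⟩ := reduce h1 (flen α) α le_rfl hα
  have hmem : flen γ ∈ lengthSet r x := ⟨γ, hγ, rfl⟩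
  have hlb : ∀ t ∈ lengthSet r x, flen γ ≤ t := by
    rintro t ⟨β, hβ, rfl⟩
    obtain ⟨β', hβ', hβ'lt, hβ'le⟩ := reduce h1 (flen β) β le_rfl hβ
    have heqγ : β' = γ := uniq h1 hβ' hγ hβ'lt hγlt
    rw [heqγ] at hβ'le
    exact hβ'le
  have hsinf : sInf (lengthSet r x) = flen γ :=
    le_antisymm (Nat.sInf_le hmem) (le_csInf ⟨_, hmem⟩ hlb)
  constructor
  · constructor
    · intro hmin i
      by_contra hge
      push_neg at hge
      obtain ⟨α', hα', hlen⟩ := step_lemma h1 hα hge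
      have h1m : sInf (lengthSet r x) ≤ flen α' := Nat.sInf_le ⟨α', hα', rfl⟩
      omega
    · intro hall
      have : α = γ := uniq h1 hα hγ hall hγlt
      rw [this, hsinf]
  · refine ⟨γ, ⟨hγ, hsinf.symm⟩, ?_⟩
    rintro β ⟨hβ, hβlen⟩
    have hβlt : ∀ i, β i < r.num.toNat := by
      intro i; by_contra hge; push_neg at hge
      obtain ⟨β', hβ', hlen⟩ := step_lemma h1 hβ hge
      have hmem2 : flen β' ∈ lengthSet r x := ⟨β', hβ', rfl⟩
      have := Nat.sInf_le hmem2
      omega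
    exact uniq h1 hβ hγ hβlt hγlt
end

section
/- Let r ∈ ℚ_{>1} \ ℕ (so n(r) > d(r) > 1 and S_r is atomic), let x ∈ S_r be nonzero, and let α be a factorization of x. Then L(x) is finite, and |α| = max L(x) if and only if α_i < d(r) for every i ≥ 1. Moreover, x has exactly one factorization of maximum length. -/
open Finsupp
open scoped ENNReal

namespace Stmt16Aux

/-- The summand function for factorizations. -/
def fq (r : ℚ) : ℕ → ℕ → ℚ := fun i c => (c : ℚ) * r ^ i

lemma fq_zero (r : ℚ) (i : ℕ) : fq r i 0 = 0 := by simp [fq]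

lemma fq_add (r : ℚ) (i : ℕ) (a b : ℕ) : fq r i (a + b) = fq r i a + fq r i b := by
  simp only [fq]; push_cast; ring

lemma isFact_iff (r x : ℚ) (α : ℕ →₀ ℕ) : IsFactorization r x α ↔ α.sum (fq r) = x :=
  Iff.rfl

lemma sum_fq_erase (r : ℚ) (α : ℕ →₀ ℕ) (N : ℕ) :
    α.sum (fq r) = (α.erase N).sum (fq r) + fq r N (α N) := by
  conv_lhs => rw [← Finsupp.erase_add_single N α]
  rw [Finsupp.sum_add_index' (fq_zero r) (fq_add r),
    Finsupp.sum_single_index (fq_zero r N)]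

lemma flen_erase (α : ℕ →₀ ℕ) (N : ℕ) : flen α = flen (α.erase N) + α N := by
  conv_lhs => rw [← Finsupp.erase_add_single N α]
  unfold flen
  rw [Finsupp.sum_add_index' (fun _ => rfl) (fun _ _ _ => rfl),
    Finsupp.sum_single_index rfl]

section basic

variable {r : ℚ} (h1 : 1 < r)

lemma num_cast (h1 : 1 < r) : ((r.num.toNat : ℚ)) = r * r.den := by
  have h0 : (0:ℚ) < r := lt_trans one_pos h1
  have hnum : (0:ℤ) ≤ r.num := le_of_lt (Rat.num_pos.mpr h0)
  have hden : ((r.den : ℚ)) ≠ 0 := by exact_mod_cast r.den_nz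
  have h2 : ((r.num : ℚ)) = r * r.den := by
    have := (div_eq_iff hden).mp (Rat.num_div_den r)
    linarith
  rw [← h2]
  exact_mod_cast congrArg (fun z : ℤ => (z : ℚ)) (Int.toNat_of_nonneg hnum)

lemma den_lt_num (h1 : 1 < r) : r.den < r.num.toNat := by
  have hd : (0:ℚ) < (r.den : ℚ) := by exact_mod_cast r.pos
  have : (r.den : ℚ) < (r.num.toNat : ℚ) := by
    rw [num_cast h1]
    nlinarith
  exact_mod_cast this

lemma num_coprime_den (h1 : 1 < r) : (r.num.toNat).Coprime r.den := by
  have hnum : (0:ℤ) ≤ r.num := le_of_lt (Rat.num_pos.mpr (lt_trans one_pos h1))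
  have h := r.reduced
  rwa [show r.num.natAbs = r.num.toNat from by omega] at h

/-- reducedness of a factorization -/
def Reduced (r : ℚ) (α : ℕ →₀ ℕ) : Prop := ∀ i : ℕ, 1 ≤ i → α i < r.den

/-- the length bound -/
lemma flen_le (h1 : 1 < r) (α : ℕ →₀ ℕ) : (flen α : ℚ) ≤ α.sum (fq r) := by
  have : (flen α : ℚ) = ∑ j ∈ α.support, (α j : ℚ) := by
    unfold flen Finsupp.sum; push_cast; rfl
  rw [this]
  unfold Finsupp.sum
  apply Finset.sum_le_sum
  intro i _
  have : (1:ℚ) ≤ r ^ i := one_le_pow₀ (le_of_lt h1)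
  unfold fq
  nlinarith [Nat.cast_nonneg (α := ℚ) (α i)]

/-- carrying: if some coefficient with index ≥ 1 is at least the denominator,
we can strictly lengthen the factorization. -/
lemma lengthen (h1 : 1 < r) {α : ℕ →₀ ℕ} {i : ℕ} (hi : 1 ≤ i) (hge : r.den ≤ α i) :
    ∃ β : ℕ →₀ ℕ, β.sum (fq r) = α.sum (fq r) ∧
      flen β = flen α + (r.num.toNat - r.den) := by
  classical
  set n := r.num.toNat with hn
  set d := r.den with hd
  refine ⟨(α.erase i + Finsupp.single (i-1) n) + Finsupp.single i (α i - d), ?_, ?_⟩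
  · rw [Finsupp.sum_add_index' (fq_zero r) (fq_add r),
      Finsupp.sum_add_index' (fq_zero r) (fq_add r),
      Finsupp.sum_single_index (fq_zero r _), Finsupp.sum_single_index (fq_zero r _)]
    rw [sum_fq_erase r α i]
    have hcast : ((α i - d : ℕ) : ℚ) = (α i : ℚ) - (d : ℚ) := Nat.cast_sub hge
    have hpow : r ^ i = r ^ (i - 1) * r := by
      rw [← pow_succ]; congr 1; omega
    have hnq : ((n : ℚ)) = r * d := num_cast h1
    unfold fq
    rw [hcast, hpow, hnq]
    ring
  · unfold flen
    rw [Finsupp.sum_add_index' (fun _ => rfl) (fun _ _ _ => rfl),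
      Finsupp.sum_add_index' (fun _ => rfl) (fun _ _ _ => rfl),
      Finsupp.sum_single_index rfl, Finsupp.sum_single_index rfl]
    have := flen_erase α i
    unfold flen at this
    have hdn : d < n := den_lt_num h1
    omega

/-- the integer form of a factorization sum -/
lemma natsum (h1 : 1 < r) (N : ℕ) (α : ℕ →₀ ℕ) (hsupp : ∀ j ∈ α.support, j < N + 1) :
    (α.sum (fq r)) * (r.den : ℚ) ^ N =
      ((∑ i ∈ Finset.range (N+1), α i * r.num.toNat ^ i * r.den ^ (N - i) : ℕ) : ℚ) := by
  rw [Finsupp.sum_of_support_subset α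
      (s := Finset.range (N+1)) (fun j hj => Finset.mem_range.mpr (hsupp j hj))
      (fq r) (fun i _ => fq_zero r i), Finset.sum_mul]
  push_cast
  apply Finset.sum_congr rfl
  intro i hi
  have hi' : i ≤ N := Nat.lt_succ_iff.mp (Finset.mem_range.mp hi)
  have hnq : ((r.num.toNat : ℚ)) = r * r.den := num_cast h1
  have hdN : ((r.den:ℚ)) ^ N = ((r.den:ℚ)) ^ i * ((r.den:ℚ)) ^ (N-i) := by
    rw [← pow_add]; congr 1; omega
  unfold fq
  rw [hdN, hnq, mul_pow]
  ring

/-- Uniqueness of reduced factorizations. -/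
lemma uniq_aux (h1 : 1 < r) :
    ∀ N (α β : ℕ →₀ ℕ), (∀ j ∈ α.support, j < N) → (∀ j ∈ β.support, j < N) →
      Reduced r α → Reduced r β → α.sum (fq r) = β.sum (fq r) → α = β := by
  intro N
  induction N with
  | zero =>
    intro α β hαs hβs _ _ _
    have hα0 : α = 0 := by
      ext j; by_contra h
      exact absurd (hαs j (Finsupp.mem_support_iff.mpr h)) (by omega)
    have hβ0 : β = 0 := by
      ext j; by_contra h
      exact absurd (hβs j (Finsupp.mem_support_iff.mpr h)) (by omega)
    rw [hα0, hβ0]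
  | succ N ih =>
    intro α β hαs hβs hrα hrβ hsum
    set n := r.num.toNat with hn
    set d := r.den with hdd
    have hE : (∑ i ∈ Finset.range (N+1), α i * n ^ i * d ^ (N - i)) =
        (∑ i ∈ Finset.range (N+1), β i * n ^ i * d ^ (N - i)) := by
      have ha := natsum h1 N α (fun j hj => hαs j hj)
      have hb := natsum h1 N β (fun j hj => hβs j hj)
      have hq : ((∑ i ∈ Finset.range (N+1), α i * n ^ i * d ^ (N - i) : ℕ) : ℚ)
           = ((∑ i ∈ Finset.range (N+1), β i * n ^ i * d ^ (N - i) : ℕ) : ℚ) := by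
        rw [← ha, ← hb, hsum]
      exact_mod_cast hq
    have htop : α N = β N := by
      rcases Nat.eq_zero_or_pos N with h0 | hpos
      · subst h0
        simpa using hE
      · rw [Finset.sum_range_succ, Finset.sum_range_succ] at hE
        have hdvd : ∀ (γ : ℕ →₀ ℕ), d ∣ ∑ i ∈ Finset.range N, γ i * n ^ i * d ^ (N - i) := by
          intro γ
          apply Finset.dvd_sum
          intro i hi
          have : i < N := Finset.mem_range.mp hi
          exact (dvd_pow_self d (by omega : N - i ≠ 0)).trans (dvd_mul_left _ _)
        have hmod : α N * n ^ N ≡ β N * n ^ N [MOD d] := by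
          simp only [Nat.sub_self, pow_zero, mul_one] at hE
          have ha := (Nat.modEq_zero_iff_dvd).mpr (hdvd α)
          have hb := (Nat.modEq_zero_iff_dvd).mpr (hdvd β)
          calc α N * n ^ N = 0 + α N * n ^ N := (zero_add _).symm
            _ ≡ (∑ i ∈ Finset.range N, α i * n ^ i * d ^ (N - i)) + α N * n ^ N [MOD d] :=
                (Nat.ModEq.add_right _ ha.symm)
            _ = (∑ i ∈ Finset.range N, β i * n ^ i * d ^ (N - i)) + β N * n ^ N := hE
            _ ≡ 0 + β N * n ^ N [MOD d] := Nat.ModEq.add_right _ hb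
            _ = β N * n ^ N := zero_add _
        have hcop : Nat.gcd d (n ^ N) = 1 := ((num_coprime_den h1).symm.pow_right N)
        have hmod2 := Nat.ModEq.cancel_right_of_coprime hcop hmod
        have hα' := hrα N hpos
        have hβ' := hrβ N hpos
        rwa [Nat.ModEq, Nat.mod_eq_of_lt hα', Nat.mod_eq_of_lt hβ'] at hmod2
    have hsum' : (α.erase N).sum (fq r) = (β.erase N).sum (fq r) := by
      have ha := sum_fq_erase r α N
      have hb := sum_fq_erase r β N
      rw [ha, hb, htop] at hsum
      linarith [hsum]
    have hsupα : ∀ j ∈ (α.erase N).support, j < N := by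
      intro j hj
      rw [Finsupp.support_erase, Finset.mem_erase] at hj
      have := hαs j hj.2
      have := hj.1
      omega
    have hsupβ : ∀ j ∈ (β.erase N).support, j < N := by
      intro j hj
      rw [Finsupp.support_erase, Finset.mem_erase] at hj
      have := hβs j hj.2
      have := hj.1
      omega
    have hredα : Reduced r (α.erase N) := by
      intro i hi
      rcases eq_or_ne i N with h | h
      · subst h; rw [Finsupp.erase_same]; have : 0 < d := r.pos; omega
      · rw [Finsupp.erase_ne h]; exact hrα i hi
    have hredβ : Reduced r (β.erase N) := by
      intro i hi
      rcases eq_or_ne i N with h | h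
      · subst h; rw [Finsupp.erase_same]; have : 0 < d := r.pos; omega
      · rw [Finsupp.erase_ne h]; exact hrβ i hi
    have heq := ih _ _ hsupα hsupβ hredα hredβ hsum'
    calc α = α.erase N + Finsupp.single N (α N) := (Finsupp.erase_add_single N α).symm
      _ = β.erase N + Finsupp.single N (β N) := by rw [heq, htop]
      _ = β := Finsupp.erase_add_single N β

end basic

end Stmt16Aux

theorem stmt16 (r : ℚ) (h1 : 1 < r) (hd : r.den ≠ 1)
    (x : ℚ) (hx : x ∈ S r) (hx0 : x ≠ 0)
    (α : ℕ →₀ ℕ) (hα : IsFactorization r x α) :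
    (lengthSet r x).Finite ∧
    (flen α = sSup (lengthSet r x) ↔ ∀ i : ℕ, 1 ≤ i → α i < r.den) ∧
    ∃! β : ℕ →₀ ℕ, IsFactorization r x β ∧ flen β = sSup (lengthSet r x) := by
  classical
  have hfin : (lengthSet r x).Finite := by
    apply Set.Finite.subset (Set.finite_Iic (⌊x⌋₊))
    rintro t ⟨γ, hγ, rfl⟩
    have h := Stmt16Aux.flen_le h1 γ
    rw [Stmt16Aux.isFact_iff] at hγ
    rw [hγ] at h
    exact Set.mem_Iic.mpr (Nat.le_floor h)
  have hne : (lengthSet r x).Nonempty := ⟨flen α, α, hα, rfl⟩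
  have hbdd : BddAbove (lengthSet r x) := hfin.bddAbove
  set m := sSup (lengthSet r x) with hm
  obtain ⟨γ, hγ, hγlen⟩ := Nat.sSup_mem hne hbdd
  have hdn : r.den < r.num.toNat := Stmt16Aux.den_lt_num h1
  have hmaxred : ∀ β : ℕ →₀ ℕ, IsFactorization r x β → flen β = m →
      Stmt16Aux.Reduced r β := by
    intro β hβ hβm i hi
    by_contra h
    push_neg at h
    obtain ⟨δ, hδsum, hδlen⟩ := Stmt16Aux.lengthen h1 hi h
    have hmem : flen δ ∈ lengthSet r x :=
      ⟨δ, by rw [Stmt16Aux.isFact_iff, hδsum]; exact hβ, rfl⟩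
    have := le_csSup hbdd hmem
    omega
  have hγred := hmaxred γ hγ hγlen
  have huniq : ∀ β₁ β₂ : ℕ →₀ ℕ, IsFactorization r x β₁ → IsFactorization r x β₂ →
      Stmt16Aux.Reduced r β₁ → Stmt16Aux.Reduced r β₂ → β₁ = β₂ := by
    intro β₁ β₂ hf₁ hf₂ hr₁ hr₂
    apply Stmt16Aux.uniq_aux h1 ((β₁.support ∪ β₂.support).sup id + 1) β₁ β₂
    · intro j hj
      have : j ≤ (β₁.support ∪ β₂.support).sup id :=
        Finset.le_sup (f := id) (Finset.mem_union_left _ hj)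
      omega
    · intro j hj
      have : j ≤ (β₁.support ∪ β₂.support).sup id :=
        Finset.le_sup (f := id) (Finset.mem_union_right _ hj)
      omega
    · exact hr₁
    · exact hr₂
    · rw [Stmt16Aux.isFact_iff] at hf₁ hf₂; rw [hf₁, hf₂]
  refine ⟨hfin, ?_, ?_⟩
  · constructor
    · intro hαm
      exact hmaxred α hα hαm
    · intro hred
      have : α = γ := huniq α γ hα hγ hred hγred
      rw [this, hγlen]
  · refine ⟨γ, ⟨hγ, hγlen⟩, ?_⟩
    rintro β ⟨hβ, hβm⟩
    exact huniq β γ hβ hγ (hmaxred β hβ hβm) hγred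
end
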